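/- For every n ≥ 3 there exists a function Ã assigning a point of ℂ to every n-element subset S of ℂ whose points all lie on a common circle c with center O and radius r > 0 and which contains no rotationally symmetric subset (i.e. no subset Q ⊆ S with at least two elements is mapped onto itself by a nontrivial rotation about O), such that: (1) Ã(S) lies on the circle c; and (2) Ã(f(S)) = f(Ã(S)) for every similarity f of the plane. -/

import Mathlib

noncomputable section

/-- A similarity of the plane: a bijection multiplying all distances by a fixed
positive ratio. -/
def IsSimilarity (f : ℂ → ℂ) : Prop :=
  Function.Bijective f ∧ ∃ r : ℝ, 0 < r ∧
    ∀ z w : ℂ, ‖f z - f w‖ = r * ‖z - w‖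

open Complex Polynomial Finset

local notation "conj'" => starRingEnd ℂ
attribute [local instance] Classical.propDecidable

def gcdK (K : Finset ℕ) : ℕ := K.gcd id

lemma bezout_ex (K : Finset ℕ) : ∃ a : ℕ → ℤ, ∑ k ∈ K, a k * k = (gcdK K : ℤ) := by
  classical
  induction K using Finset.induction_on with
  | empty => exact ⟨0, by simp [gcdK]⟩
  | @insert x K' hx ih =>
    obtain ⟨a, ha⟩ := ih
    refine ⟨fun k => if k = x then Nat.gcdA x (gcdK K') else Nat.gcdB x (gcdK K') * a k, ?_⟩
    rw [Finset.sum_insert hx]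
    have h1 : ∀ k ∈ K', (if k = x then Nat.gcdA x (gcdK K') else Nat.gcdB x (gcdK K') * a k) * k
        = Nat.gcdB x (gcdK K') * (a k * k) := by
      intro k hk
      rw [if_neg (by rintro rfl; exact hx hk)]; ring
    rw [Finset.sum_congr rfl h1, ← Finset.mul_sum, ha]
    simp only [if_pos rfl]
    have h2 : gcdK (insert x K') = Nat.gcd x (gcdK K') := by
      simp [gcdK, Finset.gcd_insert]; rfl
    rw [h2]
    have h3 := Nat.gcd_eq_gcd_ab x (gcdK K')
    push_cast [h3]
    ring

def bez (K : Finset ℕ) : ℕ → ℤ := (bezout_ex K).choose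

lemma bez_spec (K : Finset ℕ) : ∑ k ∈ K, bez K k * k = (gcdK K : ℤ) := (bezout_ex K).choose_spec

/-- scaling elementary symmetric functions -/
lemma esymm_map_mul (u : ℂ) (m : Multiset ℂ) (k : ℕ) :
    (m.map (fun z => u * z)).esymm k = u ^ k * m.esymm k := by
  have := Multiset.pow_smul_esymm (S := ℂ) u k m
  simp only [smul_eq_mul] at this
  exact this.symm

lemma esymm_map_conj (m : Multiset ℂ) (k : ℕ) :
    (m.map (fun z => (starRingEnd ℂ) z)).esymm k = (starRingEnd ℂ) (m.esymm k) := by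
  simp only [Multiset.esymm, Multiset.powersetCard_map, Multiset.map_map, Function.comp_def]
  rw [map_multiset_sum, Multiset.map_map]
  congr 1
  refine Multiset.map_congr rfl fun t _ => ?_
  simp [map_multiset_prod]

def Kset (m : Multiset ℂ) : Finset ℕ :=
  (Finset.Icc 1 (Multiset.card m)).filter (fun k => m.esymm k ≠ 0)

lemma mem_Kset {m : Multiset ℂ} {k : ℕ} :
    k ∈ Kset m ↔ (1 ≤ k ∧ k ≤ Multiset.card m) ∧ m.esymm k ≠ 0 := by
  simp [Kset, Finset.mem_filter, Finset.mem_Icc, and_assoc]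

lemma Kset_map_mul {u : ℂ} (hu : u ≠ 0) (m : Multiset ℂ) :
    Kset (m.map (fun z => u * z)) = Kset m := by
  ext k
  simp only [mem_Kset, Multiset.card_map, esymm_map_mul, mul_ne_zero_iff,
    and_congr_right_iff]
  intro _
  simp [pow_ne_zero _ hu]

lemma Kset_map_conj (m : Multiset ℂ) :
    Kset (m.map (fun z => (starRingEnd ℂ) z)) = Kset m := by
  ext k
  simp [mem_Kset, Multiset.card_map, esymm_map_conj]

def dirOf (m : Multiset ℂ) : ℂ := ∏ k ∈ Kset m, (m.esymm k) ^ (bez (Kset m) k)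

lemma dirOf_ne_zero (m : Multiset ℂ) : dirOf m ≠ 0 := by
  refine Finset.prod_ne_zero_iff.2 fun k hk => ?_
  exact zpow_ne_zero _ (mem_Kset.1 hk).2

lemma zpow_sum₀ {u : ℂ} (hu : u ≠ 0) {ι : Type*} (s : Finset ι) (f : ι → ℤ) :
    u ^ (∑ i ∈ s, f i) = ∏ i ∈ s, u ^ f i := by
  classical
  induction s using Finset.induction_on with
  | empty => simp
  | @insert x s hx ih =>
    rw [Finset.sum_insert hx, Finset.prod_insert hx, zpow_add₀ hu, ih]

lemma dirOf_map_mul {u : ℂ} (hu : u ≠ 0) (m : Multiset ℂ) :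
    dirOf (m.map (fun z => u * z)) = u ^ (gcdK (Kset m)) * dirOf m := by
  rw [dirOf, Kset_map_mul hu]
  have h1 : ∀ k ∈ Kset m, (m.map (fun z => u * z)).esymm k ^ (bez (Kset m) k)
      = u ^ ((k : ℤ) * bez (Kset m) k) * (m.esymm k) ^ (bez (Kset m) k) := by
    intro k hk
    rw [esymm_map_mul, mul_zpow, ← zpow_natCast u k, ← zpow_mul]
  rw [Finset.prod_congr rfl h1, Finset.prod_mul_distrib, ← zpow_sum₀ hu]
  have h2 : ∑ k ∈ Kset m, (k : ℤ) * bez (Kset m) k = (gcdK (Kset m) : ℤ) := by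
    rw [← bez_spec]; exact Finset.sum_congr rfl fun k _ => mul_comm _ _
  rw [h2, dirOf, zpow_natCast]

lemma dirOf_map_conj (m : Multiset ℂ) :
    dirOf (m.map (fun z => (starRingEnd ℂ) z)) = (starRingEnd ℂ) (dirOf m) := by
  rw [dirOf, Kset_map_conj, dirOf, map_prod]
  refine Finset.prod_congr rfl fun k _ => ?_
  rw [esymm_map_conj, map_zpow₀]

/-- If `u^k = 1` for every `k` with nonzero `esymm`, the multiset is invariant under
multiplication by `u`. -/
lemma map_rot_eq (m : Multiset ℂ) (u : ℂ) (h : ∀ k ∈ Kset m, u ^ k = 1) :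
    m.map (fun z => u * z) = m := by
  set n := Multiset.card m with hn
  have hcard : Multiset.card (m.map (fun z => u * z)) = n := by simp [hn]
  have hpoly : ((m.map (fun z => u * z)).map (fun t => X - C t)).prod
      = (m.map (fun t => X - C t)).prod := by
    ext k
    rcases le_or_gt k n with hk | hk
    · rw [Multiset.prod_X_sub_C_coeff _ (by rw [hcard]; exact hk),
        Multiset.prod_X_sub_C_coeff _ (by rw [← hn]; exact hk), hcard, ← hn]
      rw [esymm_map_mul]
      rcases eq_or_ne (m.esymm (n - k)) 0 with hz | hz
      · rw [hz, mul_zero, mul_zero]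
      · rcases Nat.eq_zero_or_pos (n - k) with h0 | hpos
        · rw [h0]; norm_num
        · have hK : (n - k) ∈ Kset m := mem_Kset.2 ⟨⟨hpos, Nat.sub_le _ _⟩, hz⟩
          rw [h _ hK, one_mul]
    · have d1 : (((m.map fun z => u * z).map fun t => X - C t).prod).natDegree < k := by
        rw [natDegree_multiset_prod_X_sub_C_eq_card, hcard]; exact hk
      have d2 : ((m.map fun t => X - C t).prod).natDegree < k := by
        rw [natDegree_multiset_prod_X_sub_C_eq_card, ← hn]; exact hk
      rw [Polynomial.coeff_eq_zero_of_natDegree_lt d1, Polynomial.coeff_eq_zero_of_natDegree_lt d2]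
  have := congrArg Polynomial.roots hpoly
  rwa [Polynomial.roots_multiset_prod_X_sub_C, Polynomial.roots_multiset_prod_X_sub_C] at this

lemma esymm_card (m : Multiset ℂ) : m.esymm (Multiset.card m) = m.prod := by
  rw [Multiset.esymm]
  have h1 : Multiset.powersetCard (Multiset.card m) m = {m} := by
    have hc : Multiset.card (Multiset.powersetCard (Multiset.card m) m) = 1 := by
      rw [Multiset.card_powersetCard, Nat.choose_self]
    obtain ⟨t, ht⟩ := Multiset.card_eq_one.1 hc
    have htm : t = m := by
      have : t ∈ Multiset.powersetCard (Multiset.card m) m := by rw [ht]; simp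
      obtain ⟨hle, hcard⟩ := Multiset.mem_powersetCard.1 this
      exact Multiset.eq_of_le_of_card_le hle (le_of_eq hcard.symm)
    rw [ht, htm]
  rw [h1]; simp

lemma card_mem_Kset {m : Multiset ℂ} (h2 : 1 ≤ Multiset.card m) (h0 : (0 : ℂ) ∉ m) :
    Multiset.card m ∈ Kset m := by
  refine mem_Kset.2 ⟨⟨h2, le_rfl⟩, ?_⟩
  rw [esymm_card]
  exact Multiset.prod_ne_zero h0


lemma gcd_Kset_eq_one (m : Multiset ℂ) (h2 : 2 ≤ Multiset.card m) (h0 : (0 : ℂ) ∉ m)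
    (hsym : ∀ u : ℂ, ‖u‖ = 1 → u ≠ 1 → m.map (fun z => u * z) ≠ m) :
    gcdK (Kset m) = 1 := by
  set d := gcdK (Kset m) with hd
  have hnK : Multiset.card m ∈ Kset m := card_mem_Kset (le_trans one_le_two h2) h0
  have hdvd : d ∣ Multiset.card m := Finset.gcd_dvd hnK
  have hdne : d ≠ 0 := by
    intro h
    rw [h] at hdvd
    have := Nat.eq_zero_of_zero_dvd hdvd
    omega
  by_contra hne
  have hd2 : 2 ≤ d := by omega
  have hprim : IsPrimitiveRoot (Complex.exp (2 * Real.pi * Complex.I / d)) d :=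
    Complex.isPrimitiveRoot_exp d hdne
  set u : ℂ := Complex.exp (2 * Real.pi * Complex.I / d) with hu
  have habs : ‖u‖ = 1 := by
    rw [hu, Complex.norm_exp]
    have : (2 * ↑Real.pi * Complex.I / (d : ℂ)).re = 0 := by
      have : (2 * ↑Real.pi * Complex.I / (d : ℂ)) = ((2 * Real.pi / d : ℝ) : ℂ) * Complex.I := by
        push_cast; field_simp
      rw [this]
      simp
    rw [this, Real.exp_zero]
  have hune : u ≠ 1 := by
    have := hprim.pow_ne_one_of_pos_of_lt (l := 1) one_ne_zero (by omega)
    simpa using this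
  have hpow : ∀ k ∈ Kset m, u ^ k = 1 := by
    intro k hk
    have hdk : d ∣ k := Finset.gcd_dvd hk
    obtain ⟨j, hj⟩ := hdk
    rw [hj, pow_mul, hprim.pow_eq_one, one_pow]
  exact hsym u habs hune (map_rot_eq m u hpow)

lemma circle_unique {S : Set ℂ} {O O' : ℂ} {r r' : ℝ} (h3 : 3 ≤ S.ncard)
    (hr : 0 < r) (hr' : 0 < r')
    (hc : ∀ z ∈ S, ‖z - O‖ = r) (hc' : ∀ z ∈ S, ‖z - O'‖ = r') :
    O = O' ∧ r = r' := by
  obtain ⟨T, hTsub, hTcard⟩ := Set.exists_subset_card_eq h3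
  obtain ⟨a, b, c, hab, hac, hbc, hTeq⟩ := Set.ncard_eq_three.1 hTcard
  have haS : a ∈ S := hTsub (by rw [hTeq]; simp)
  have hbS : b ∈ S := hTsub (by rw [hTeq]; simp)
  have hcS : c ∈ S := hTsub (by rw [hTeq]; simp)
  have key : ∀ z ∈ S, (z - O) * (conj' z - conj' O) = ((r : ℂ))^2 := by
    intro z hz
    rw [← map_sub, Complex.mul_conj, Complex.normSq_eq_norm_sq, hc z hz]
    push_cast; ring
  have key' : ∀ z ∈ S, (z - O') * (conj' z - conj' O') = ((r' : ℂ))^2 := by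
    intro z hz
    rw [← map_sub, Complex.mul_conj, Complex.normSq_eq_norm_sq, hc' z hz]
    push_cast; ring
  have hO : O = O' := by
    by_contra hOO
    set d : ℂ := O' - O with hd
    have hdne : d ≠ 0 := sub_ne_zero.2 (Ne.symm hOO)
    have hdcne : conj' d ≠ 0 := by
      simpa using hdne
    have st1 : ∀ x ∈ S, ∀ y ∈ S,
        (conj' x - conj' y) * d + (x - y) * conj' d = 0 := by
      intro x hx y hy
      have e1 := key x hx; have e2 := key y hy
      have e1' := key' x hx; have e2' := key' y hy
      simp only [hd, map_sub]
      linear_combination e1 - e2 - e1' + e2'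
    -- t for pair (a,b)
    set t : ℂ := (a - b) * conj' d with ht0
    have hconjt : conj' t = -t := by
      have h := st1 a haS b hbS
      rw [ht0]
      simp only [map_mul, map_sub, Complex.conj_conj]
      linear_combination h
    have htre : t.re = 0 := by
      have := congrArg Complex.re hconjt
      simp only [Complex.conj_re, Complex.neg_re] at this
      linarith
    set α : ℝ := t.im with hα
    have ht : t = (α : ℂ) * Complex.I := by
      rw [← Complex.re_add_im t, htre]
      simp [hα]
    set s : ℂ := (a - c) * conj' d with hs
    have hconjs : conj' s = -s := by
      have h := st1 a haS c hcS
      rw [hs]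
      simp only [map_mul, map_sub, Complex.conj_conj]
      linear_combination h
    have hsre : s.re = 0 := by
      have := congrArg Complex.re hconjs
      simp only [Complex.conj_re, Complex.neg_re] at this
      linarith
    set β : ℝ := s.im with hβ
    have hsim : s = (β : ℂ) * Complex.I := by
      rw [← Complex.re_add_im s, hsre]
      simp [hβ]
    have k1 : (a - b) * conj' d = (α : ℂ) * Complex.I := ht
    have k1' : (conj' a - conj' b) * d = -((α : ℂ) * Complex.I) := by
      have h := st1 a haS b hbS
      linear_combination h - k1
    have k2 : (a - c) * conj' d = (β : ℂ) * Complex.I := hsim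
    have k2' : (conj' a - conj' c) * d = -((β : ℂ) * Complex.I) := by
      have h := st1 a haS c hcS
      linear_combination h - k2
    have C1 : (α : ℂ) * Complex.I *
        (-(a - O) * conj' d + (conj' a - conj' O) * d + (α : ℂ) * Complex.I) = 0 := by
      linear_combination (d * conj' d) * (key a haS) - (d * conj' d) * (key b hbS)
        - ((conj' a - conj' O) * d + (α : ℂ) * Complex.I) * k1 + ((O - b) * conj' d) * k1'
    have C2 : (β : ℂ) * Complex.I *
        (-(a - O) * conj' d + (conj' a - conj' O) * d + (β : ℂ) * Complex.I) = 0 := by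
      linear_combination (d * conj' d) * (key a haS) - (d * conj' d) * (key c hcS)
        - ((conj' a - conj' O) * d + (β : ℂ) * Complex.I) * k2 + ((O - c) * conj' d) * k2'
    have hαne : (α : ℂ) ≠ 0 := by
      intro h0
      apply hab
      have : (a - b) * conj' d = 0 := by rw [k1, h0, zero_mul]
      rcases mul_eq_zero.1 this with h | h
      · exact sub_eq_zero.1 h
      · exact absurd h hdcne
    have hβne : (β : ℂ) ≠ 0 := by
      intro h0
      apply hac
      have : (a - c) * conj' d = 0 := by rw [k2, h0, zero_mul]
      rcases mul_eq_zero.1 this with h | h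
      · exact sub_eq_zero.1 h
      · exact absurd h hdcne
    have P1 : -(a - O) * conj' d + (conj' a - conj' O) * d + (α : ℂ) * Complex.I = 0 := by
      rcases mul_eq_zero.1 C1 with h | h
      · exact absurd h (mul_ne_zero hαne Complex.I_ne_zero)
      · exact h
    have P2 : -(a - O) * conj' d + (conj' a - conj' O) * d + (β : ℂ) * Complex.I = 0 := by
      rcases mul_eq_zero.1 C2 with h | h
      · exact absurd h (mul_ne_zero hβne Complex.I_ne_zero)
      · exact h
    have hαβ : (α : ℂ) = (β : ℂ) := by
      have h2 : ((α : ℂ) - (β : ℂ)) * Complex.I = 0 := by linear_combination P1 - P2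
      rcases mul_eq_zero.1 h2 with h3 | h3
      · exact sub_eq_zero.1 h3
      · exact absurd h3 Complex.I_ne_zero
    -- α = β gives t = s, hence b = c
    apply hbc
    have heq : (a - b) * conj' d = (a - c) * conj' d := by rw [k1, k2, hαβ]
    have h4 := mul_right_cancel₀ hdcne heq
    linear_combination -h4
  refine ⟨hO, ?_⟩
  have h1 := hc a haS
  have h2 := hc' a haS
  rw [← hO] at h2
  rw [h1] at h2
  exact h2

lemma similarity_form {f : ℂ → ℂ} (hf : IsSimilarity f) :
    ∃ a b : ℂ, a ≠ 0 ∧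
      ((∀ z, f z = a * z + b) ∨ (∀ z, f z = a * (starRingEnd ℂ) z + b)) := by
  obtain ⟨hbij, r, hr, hd⟩ := hf
  set g : ℂ → ℂ := fun z => (f z - f 0) / r with hg
  have hrC : (r : ℂ) ≠ 0 := by exact_mod_cast hr.ne'
  have hgbij : Function.Bijective g := by
    have h1 : Function.Bijective (fun z : ℂ => (z - f 0) / r) := by
      constructor
      · intro x y hxy
        simp only at hxy
        field_simp at hxy
        exact sub_left_inj.mp hxy
      · intro y
        exact ⟨y * r + f 0, by field_simp; ring⟩
    exact h1.comp hbij
  have hgiso : Isometry g := by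
    apply Isometry.of_dist_eq
    intro z w
    rw [Complex.dist_eq, Complex.dist_eq, hg]
    simp only
    have h1 : (f z - f 0) / (r:ℂ) - (f w - f 0) / (r:ℂ) = (f z - f w) / r := by
      field_simp
      ring
    rw [h1, norm_div, Complex.norm_real, Real.norm_eq_abs, abs_of_pos hr, hd z w]
    field_simp
  have hg0 : g 0 = 0 := by simp [hg]
  let ie : ℂ ≃ᵢ ℂ := ⟨Equiv.ofBijective g hgbij, hgiso⟩
  have hie : ∀ z, ie z = g z := fun z => rfl
  let li : ℂ ≃ₗᵢ[ℝ] ℂ := ie.toRealLinearIsometryEquivOfMapZero hg0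
  have hli : ∀ z, li z = g z := fun z => rfl
  obtain ⟨a, ha⟩ := linear_isometry_complex li
  have hane : (r : ℂ) * (a : ℂ) ≠ 0 := mul_ne_zero hrC (Circle.coe_ne_zero a)
  rcases ha with h1 | h1
  · refine ⟨(r : ℂ) * a, f 0, hane, Or.inl fun z => ?_⟩
    have h2 : g z = a * z := by rw [← hli, h1, rotation_apply]
    have h3 : f z - f 0 = (r : ℂ) * (a * z) := by
      rw [← h2, hg]
      field_simp
    linear_combination h3
  · refine ⟨(r : ℂ) * a, f 0, hane, Or.inr fun z => ?_⟩
    have h2 : g z = a * (starRingEnd ℂ) z := by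
      rw [← hli, h1]
      simp [rotation_apply, conjLIE]
      rfl
    have h3 : f z - f 0 = (r : ℂ) * (a * (starRingEnd ℂ) z) := by
      rw [← h2, hg]
      field_simp
    linear_combination h3

-- new material
def msOf (S : Set ℂ) : Multiset ℂ := if h : S.Finite then h.toFinset.1 else 0

lemma mem_msOf {S : Set ℂ} (h : S.Finite) {z : ℂ} : z ∈ msOf S ↔ z ∈ S := by
  rw [msOf, dif_pos h, ← Finset.mem_def, Set.Finite.mem_toFinset]

lemma card_msOf {S : Set ℂ} (h : S.Finite) : Multiset.card (msOf S) = S.ncard := by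
  rw [msOf, dif_pos h, Set.ncard_eq_toFinset_card _ h]
  rfl

lemma msOf_image {S : Set ℂ} (h : S.Finite) {f : ℂ → ℂ} (hf : Function.Injective f) :
    msOf (f '' S) = (msOf S).map f := by
  classical
  have h2 : (f '' S).Finite := h.image f
  rw [msOf, msOf, dif_pos h2, dif_pos h]
  rw [Set.Finite.toFinset_image f h h2]
  rw [Finset.image_val, Multiset.dedup_eq_self.2 (h.toFinset.nodup.map hf)]

def myGood (S : Set ℂ) (O : ℂ) (r : ℝ) : Prop :=
  3 ≤ S.ncard ∧ 0 < r ∧ (∀ z ∈ S, ‖z - O‖ = r) ∧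
    ¬ ∃ Q : Set ℂ, Q ⊆ S ∧ 2 ≤ Q.ncard ∧ ∃ u : ℂ, ‖u‖ = 1 ∧
        u ≠ 1 ∧ (fun z => O + u * (z - O)) '' Q = Q

def normW (S : Set ℂ) (O : ℂ) (r : ℝ) : Multiset ℂ := (msOf S).map (fun z => (z - O) / (r : ℂ))

def Afun (S : Set ℂ) : ℂ :=
  if h : ∃ p : ℂ × ℝ, myGood S p.1 p.2 then
    h.choose.1 + (h.choose.2 : ℂ) *
      (dirOf (normW S h.choose.1 h.choose.2) /
        (‖dirOf (normW S h.choose.1 h.choose.2)‖ : ℝ))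
  else 0

lemma Afun_eq {S : Set ℂ} {O : ℂ} {r : ℝ} (h : myGood S O r) :
    Afun S = O + (r : ℂ) *
      (dirOf (normW S O r) / (‖dirOf (normW S O r)‖ : ℝ)) := by
  have hex : ∃ p : ℂ × ℝ, myGood S p.1 p.2 := ⟨(O, r), h⟩
  rw [Afun, dif_pos hex]
  obtain ⟨hO, hr⟩ := circle_unique hex.choose_spec.1 hex.choose_spec.2.1 h.2.1
    hex.choose_spec.2.2.1 h.2.2.1
  rw [hO, hr]

lemma good_finite {S : Set ℂ} {O : ℂ} {r : ℝ} (h : myGood S O r) : S.Finite :=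
  Set.finite_of_ncard_ne_zero (by have := h.1; omega)

lemma good_cardW {S : Set ℂ} {O : ℂ} {r : ℝ} (h : myGood S O r) :
    3 ≤ Multiset.card (normW S O r) := by
  rw [normW, Multiset.card_map, card_msOf (good_finite h)]
  exact h.1

lemma good_zero_notmem {S : Set ℂ} {O : ℂ} {r : ℝ} (h : myGood S O r) :
    (0 : ℂ) ∉ normW S O r := by
  rw [normW]
  intro hmem
  obtain ⟨z, hz, hz0⟩ := Multiset.mem_map.1 hmem
  rw [mem_msOf (good_finite h)] at hz
  have hrne : (r : ℂ) ≠ 0 := by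
    exact_mod_cast h.2.1.ne'
  have : z - O = 0 := by
    field_simp at hz0
    simpa using hz0
  have h2 := h.2.2.1 z hz
  rw [this] at h2
  simp at h2
  exact h.2.1.ne' h2.symm

lemma good_nosymW {S : Set ℂ} {O : ℂ} {r : ℝ} (h : myGood S O r) :
    ∀ u : ℂ, ‖u‖ = 1 → u ≠ 1 → (normW S O r).map (fun z => u * z) ≠ normW S O r := by
  intro u hu1 hune heq
  have hfin := good_finite h
  have hu0 : u ≠ 0 := by
    intro h0; rw [h0] at hu1; simp at hu1
  have hrne : (r : ℂ) ≠ 0 := by exact_mod_cast h.2.1.ne'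
  set ρ : ℂ → ℂ := fun z => O + u * (z - O) with hρ
  have hρinj : Function.Injective ρ := by
    intro x y hxy
    simp only [hρ] at hxy
    have : u * (x - O) = u * (y - O) := by linear_combination hxy
    have h2 := mul_left_cancel₀ hu0 this
    linear_combination h2
  set φ : ℂ → ℂ := fun z => (z - O) / (r : ℂ) with hφ
  have hφinj : Function.Injective φ := by
    intro x y hxy
    simp only [hφ] at hxy
    field_simp at hxy
    linear_combination hxy
  have hSS : ρ '' S = S := by
    have h1 : msOf (ρ '' S) = (msOf S).map ρ := msOf_image hfin hρinj
    have h2 : (msOf (ρ '' S)).map φ = (msOf S).map φ := by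
      rw [h1, Multiset.map_map]
      have h3 : ((msOf S).map (φ ∘ ρ)) = ((msOf S).map φ).map (fun z => u * z) := by
        rw [Multiset.map_map]
        refine Multiset.map_congr rfl fun z _ => ?_
        simp only [Function.comp, hφ, hρ]
        field_simp
        ring
      rw [h3]
      exact heq
    have h4 := Multiset.map_injective hφinj h2
    ext z
    constructor
    · intro hz
      rw [← mem_msOf (hfin.image ρ)] at hz
      rw [h4, mem_msOf hfin] at hz
      exact hz
    · intro hz
      rw [← mem_msOf hfin, ← h4, mem_msOf (hfin.image ρ)] at hz
      exact hz
  exact h.2.2.2 ⟨S, subset_rfl, by have := h.1; omega, u, hu1, hune, hSS⟩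

lemma good_gcd {S : Set ℂ} {O : ℂ} {r : ℝ} (h : myGood S O r) :
    gcdK (Kset (normW S O r)) = 1 :=
  gcd_Kset_eq_one _ (by have := good_cardW h; omega) (good_zero_notmem h) (good_nosymW h)

lemma myGood_image_direct {S : Set ℂ} {O : ℂ} {r : ℝ} (h : myGood S O r) {a b : ℂ}
    (ha : a ≠ 0) : myGood ((fun z => a * z + b) '' S) (a * O + b) (‖a‖ * r) := by
  set g : ℂ → ℂ := fun z => a * z + b with hg
  have hginj : Function.Injective g := by
    intro x y hxy
    simp only [hg] at hxy
    have : a * x = a * y := by linear_combination hxy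
    exact mul_left_cancel₀ ha this
  have hapos : 0 < ‖a‖ := by
    simpa using norm_pos_iff.mpr ha
  refine ⟨?_, mul_pos hapos h.2.1, ?_, ?_⟩
  · rw [Set.ncard_image_of_injective _ hginj]; exact h.1
  · rintro z' ⟨z, hz, rfl⟩
    have h1 : g z - (a * O + b) = a * (z - O) := by simp only [hg]; ring
    rw [h1, norm_mul, h.2.2.1 z hz]
  · rintro ⟨Q', hQ'sub, hQ'card, u, hu1, hune, hrot⟩
    apply h.2.2.2
    set Q : Set ℂ := g ⁻¹' Q' with hQ
    have hgsurj : Function.Surjective g := by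
      intro w
      refine ⟨(w - b) / a, ?_⟩
      simp only [hg]
      field_simp
      ring
    have hQ'img : g '' Q = Q' := by
      rw [hQ, Set.image_preimage_eq Q' hgsurj]
    have hQsub : Q ⊆ S := by
      intro z hz
      have : g z ∈ Q' := hz
      obtain ⟨w, hw, hweq⟩ := hQ'sub this
      rwa [← hginj hweq]
    have hQcard : 2 ≤ Q.ncard := by
      rw [← hQ'img, Set.ncard_image_of_injective _ hginj] at hQ'card
      exact hQ'card
    refine ⟨Q, hQsub, hQcard, u, hu1, hune, ?_⟩
    have hcomm : ∀ z, g (O + u * (z - O)) = (a * O + b) + u * (g z - (a * O + b)) := by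
      intro z; simp only [hg]; ring
    have h5 : g '' ((fun z => O + u * (z - O)) '' Q) = g '' Q := by
      rw [Set.image_image]
      have : (fun z => g (O + u * (z - O))) '' Q
          = (fun w => (a * O + b) + u * (w - (a * O + b))) '' (g '' Q) := by
        rw [Set.image_image]
        exact Set.image_congr' (fun z => hcomm z)
      rw [this, hQ'img, hrot]
    exact Set.image_injective.2 hginj h5

lemma myGood_image_conj {S : Set ℂ} {O : ℂ} {r : ℝ} (h : myGood S O r) {a b : ℂ}
    (ha : a ≠ 0) :
    myGood ((fun z => a * conj' z + b) '' S) (a * conj' O + b) (‖a‖ * r) := by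
  set g : ℂ → ℂ := fun z => a * conj' z + b with hg
  have hginj : Function.Injective g := by
    intro x y hxy
    simp only [hg] at hxy
    have h1 : a * conj' x = a * conj' y := by linear_combination hxy
    have h2 := mul_left_cancel₀ ha h1
    exact star_injective h2
  have hapos : 0 < ‖a‖ := by
    simpa using norm_pos_iff.mpr ha
  refine ⟨?_, mul_pos hapos h.2.1, ?_, ?_⟩
  · rw [Set.ncard_image_of_injective _ hginj]; exact h.1
  · rintro z' ⟨z, hz, rfl⟩
    have h1 : g z - (a * conj' O + b) = a * conj' (z - O) := by
      simp only [hg, map_sub]; ring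
    rw [h1, norm_mul, Complex.norm_conj, h.2.2.1 z hz]
  · rintro ⟨Q', hQ'sub, hQ'card, u', hu1, hune, hrot⟩
    apply h.2.2.2
    set Q : Set ℂ := g ⁻¹' Q' with hQ
    have hgsurj : Function.Surjective g := by
      intro w
      refine ⟨conj' ((w - b) / a), ?_⟩
      simp only [hg, Complex.conj_conj]
      field_simp
      ring
    have hQ'img : g '' Q = Q' := by
      rw [hQ, Set.image_preimage_eq Q' hgsurj]
    have hQsub : Q ⊆ S := by
      intro z hz
      have : g z ∈ Q' := hz
      obtain ⟨w, hw, hweq⟩ := hQ'sub this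
      rwa [← hginj hweq]
    have hQcard : 2 ≤ Q.ncard := by
      rw [← hQ'img, Set.ncard_image_of_injective _ hginj] at hQ'card
      exact hQ'card
    refine ⟨Q, hQsub, hQcard, conj' u', ?_, ?_, ?_⟩
    · rw [Complex.norm_conj]; exact hu1
    · intro hcontra
      apply hune
      have := congrArg conj' hcontra
      simpa using this
    · have hcomm : ∀ z, g (O + conj' u' * (z - O))
          = (a * conj' O + b) + u' * (g z - (a * conj' O + b)) := by
        intro z
        simp only [hg, map_add, map_mul, map_sub, Complex.conj_conj]
        ring
      have h5 : g '' ((fun z => O + conj' u' * (z - O)) '' Q) = g '' Q := by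
        rw [Set.image_image]
        have : (fun z => g (O + conj' u' * (z - O))) '' Q
            = (fun w => (a * conj' O + b) + u' * (w - (a * conj' O + b))) '' (g '' Q) := by
          rw [Set.image_image]
          exact Set.image_congr' (fun z => hcomm z)
        rw [this, hQ'img, hrot]
      exact Set.image_injective.2 hginj h5

lemma abs_ne_zeroC {a : ℂ} (ha : a ≠ 0) : (‖a‖ : ℂ) ≠ 0 := by
  have : ‖a‖ ≠ 0 := norm_ne_zero_iff.mpr ha
  exact_mod_cast this

lemma Afun_image_direct {S : Set ℂ} {O : ℂ} {r : ℝ} (h : myGood S O r) {a b : ℂ}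
    (ha : a ≠ 0) : Afun ((fun z => a * z + b) '' S) = a * Afun S + b := by
  have h' := myGood_image_direct h (b := b) ha
  rw [Afun_eq h', Afun_eq h]
  have hfin := good_finite h
  have hginj : Function.Injective (fun z => a * z + b) := by
    intro x y hxy
    simp only at hxy
    have : a * x = a * y := by linear_combination hxy
    exact mul_left_cancel₀ ha this
  set u : ℂ := a / (‖a‖ : ℂ) with hu
  have hu0 : u ≠ 0 := div_ne_zero ha (abs_ne_zeroC ha)
  set W := normW S O r with hW
  have hrne : (r : ℂ) ≠ 0 := by exact_mod_cast h.2.1.ne'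
  have hW' : normW ((fun z => a * z + b) '' S) (a * O + b) (‖a‖ * r)
      = W.map (fun z => u * z) := by
    rw [normW, msOf_image hfin hginj, Multiset.map_map, hW, normW, Multiset.map_map]
    refine Multiset.map_congr rfl fun z _ => ?_
    simp only [Function.comp, hu]
    push_cast
    field_simp
    ring
  rw [hW', dirOf_map_mul hu0, hW, good_gcd h, pow_one]
  set v := dirOf W with hv
  have hvne : v ≠ 0 := dirOf_ne_zero W
  have habsu : ‖u‖ = 1 := by
    rw [hu, norm_div, Complex.norm_real, Real.norm_eq_abs, abs_of_pos (norm_pos_iff.mpr ha), div_self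
      (norm_ne_zero_iff.mpr ha)]
  have habsuv : ‖u * v‖ = ‖v‖ := by
    rw [norm_mul, habsu, one_mul]
  rw [habsuv]
  have hvabs : (‖v‖ : ℂ) ≠ 0 := abs_ne_zeroC hvne
  have haC : (‖a‖ : ℂ) ≠ 0 := abs_ne_zeroC ha
  push_cast
  rw [hu]; field_simp
  ring

lemma Afun_image_conj {S : Set ℂ} {O : ℂ} {r : ℝ} (h : myGood S O r) {a b : ℂ}
    (ha : a ≠ 0) :
    Afun ((fun z => a * conj' z + b) '' S) = a * conj' (Afun S) + b := by
  have h' := myGood_image_conj h (b := b) ha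
  rw [Afun_eq h', Afun_eq h]
  have hfin := good_finite h
  have hginj : Function.Injective (fun z => a * conj' z + b) := by
    intro x y hxy
    simp only at hxy
    have h1 : a * conj' x = a * conj' y := by linear_combination hxy
    exact star_injective (mul_left_cancel₀ ha h1)
  set u : ℂ := a / (‖a‖ : ℂ) with hu
  have hu0 : u ≠ 0 := div_ne_zero ha (abs_ne_zeroC ha)
  set W := normW S O r with hW
  have hrne : (r : ℂ) ≠ 0 := by exact_mod_cast h.2.1.ne'
  have hW' : normW ((fun z => a * conj' z + b) '' S) (a * conj' O + b) (‖a‖ * r)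
      = (W.map (fun z => conj' z)).map (fun z => u * z) := by
    rw [normW, msOf_image hfin hginj, Multiset.map_map, hW, normW, Multiset.map_map,
      Multiset.map_map]
    refine Multiset.map_congr rfl fun z _ => ?_
    simp only [Function.comp, hu, map_sub, map_div₀, Complex.conj_ofReal]
    push_cast
    field_simp
    ring
  rw [hW', dirOf_map_mul hu0, Kset_map_conj, hW, good_gcd h, pow_one, dirOf_map_conj]
  set v := dirOf W with hv
  have hvne : v ≠ 0 := dirOf_ne_zero W
  have habsu : ‖u‖ = 1 := by
    rw [hu, norm_div, Complex.norm_real, Real.norm_eq_abs, abs_of_pos (norm_pos_iff.mpr ha), div_self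
      (norm_ne_zero_iff.mpr ha)]
  have habsuv : ‖u * conj' v‖ = ‖v‖ := by
    rw [norm_mul, habsu, one_mul, Complex.norm_conj]
  rw [habsuv]
  have hvabs : (‖v‖ : ℂ) ≠ 0 := abs_ne_zeroC hvne
  have haC : (‖a‖ : ℂ) ≠ 0 := abs_ne_zeroC ha
  simp only [map_add, map_mul, map_div₀, Complex.conj_ofReal]
  push_cast
  rw [hu]; field_simp
  ring

/-- For every `n ≥ 3` there is a function `A` assigning to each `n`-element
subset `S` of ℂ lying on a common circle (center `O`, radius `r`) and
containing no rotationally symmetric subset (no subset with at least two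
elements mapped onto itself by a nontrivial rotation about `O`) a point
`A S` on the circle, commuting with similarities. -/
theorem stmt6 (n : ℕ) (hn : 3 ≤ n) :
    ∃ A : Set ℂ → ℂ,
      ∀ (S : Set ℂ) (O : ℂ) (r : ℝ), S.ncard = n → 0 < r →
        (∀ z ∈ S, ‖z - O‖ = r) →
        (¬ ∃ Q : Set ℂ, Q ⊆ S ∧ 2 ≤ Q.ncard ∧ ∃ u : ℂ, ‖u‖ = 1 ∧
            u ≠ 1 ∧ (fun z => O + u * (z - O)) '' Q = Q) →
        ‖A S - O‖ = r ∧
        (∀ f : ℂ → ℂ, IsSimilarity f → A (f '' S) = f (A S)) := by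
  refine ⟨Afun, ?_⟩
  intro S O r hcard hr hcirc hnosym
  have hGood : myGood S O r := ⟨by omega, hr, hcirc, hnosym⟩
  constructor
  · rw [Afun_eq hGood]
    set v := dirOf (normW S O r) with hv
    have hvne : v ≠ 0 := dirOf_ne_zero _
    have hvabs : (‖v‖ : ℂ) ≠ 0 := abs_ne_zeroC hvne
    have h1 : O + (r : ℂ) * (v / (‖v‖ : ℝ)) - O = (r : ℂ) * (v / (‖v‖ : ℝ)) := by
      ring
    rw [h1, norm_mul, norm_div, Complex.norm_real, Complex.norm_real, Real.norm_eq_abs, Real.norm_eq_abs,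
      abs_of_pos hr, _root_.abs_of_nonneg (norm_nonneg v), div_self (norm_ne_zero_iff.mpr hvne),
      mul_one]
  · intro f hf
    obtain ⟨a, b, ha, hform⟩ := similarity_form hf
    rcases hform with hform | hform
    · have himg : f '' S = (fun z => a * z + b) '' S := Set.image_congr' hform
      rw [himg, Afun_image_direct hGood ha, hform]
    · have himg : f '' S = (fun z => a * conj' z + b) '' S := Set.image_congr' hform
      rw [himg, Afun_image_conj hGood ha, hform]
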